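/- As r → ∞ (r a positive integer), the sequence Σ_{k=0}^{r−1} [ C(r−1,k) (1/2)^{r−1} ] · Σ_{j=0}^{r−k} [ C(r+j−1,j) (2/3)^{r} (1/3)^{j} ] converges to 1/2. -/

import Mathlib

open Finset Filter

namespace SecondTerm

/-- pmf of Binomial(n, 2/3) at k (0 for k > n). -/
noncomputable def W (n k : ℕ) : ℝ := (n.choose k : ℝ) * (2/3)^k * (1/3)^(n-k)

/-- tail P(Bin(n,2/3) ≥ s). -/
noncomputable def T (n s : ℕ) : ℝ := ∑ i ∈ Finset.Ico s (n+1), W n i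

lemma W_nonneg (n k : ℕ) : 0 ≤ W n k := by
  unfold W; positivity

lemma W_zero_of_gt {n k : ℕ} (h : n < k) : W n k = 0 := by
  simp [W, Nat.choose_eq_zero_of_lt h]

lemma sum_W (n : ℕ) : ∑ k ∈ range (n+1), W n k = 1 := by
  have h := add_pow (2/3 : ℝ) (1/3) n
  norm_num at h
  rw [show (1:ℝ) = ∑ x ∈ range (n + 1), (2 / 3) ^ x * (1 / 3) ^ (n - x) * (n.choose x : ℝ) from h]
  exact Finset.sum_congr rfl fun k _ => by unfold W; ring

lemma W_succ_succ (n k : ℕ) : W (n+1) (k+1) = (2/3) * W n k + (1/3) * W n (k+1) := by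
  unfold W
  rcases le_or_gt (k+1) n with h | h
  · rw [Nat.choose_succ_succ]
    push_cast
    rw [show n - k = (n - (k+1)) + 1 from by omega]
    ring
  · rcases le_or_gt (k+1) (n+1) with h2 | h2
    · have hk : k = n := by omega
      subst hk
      simp [Nat.choose_self, Nat.choose_succ_self, Nat.sub_self]
      ring
    · rw [Nat.choose_eq_zero_of_lt h2, Nat.choose_eq_zero_of_lt h,
        Nat.choose_eq_zero_of_lt (by omega)]
      simp

lemma W_succ_zero (n : ℕ) : W (n+1) 0 = (1/3) * W n 0 := by
  simp [W, pow_succ]; ring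

lemma T_zero (n : ℕ) : T n 0 = 1 := by
  unfold T
  rw [show Finset.Ico 0 (n+1) = range (n+1) from by ext x; simp]
  exact sum_W n

lemma T_of_gt {n s : ℕ} (h : n < s) : T n s = 0 := by
  unfold T
  rw [Finset.Ico_eq_empty (by omega), Finset.sum_empty]

lemma T_step (n s : ℕ) : T n s = W n s + T n (s+1) := by
  rcases le_or_gt s n with h | h
  · unfold T
    exact Finset.sum_eq_sum_Ico_succ_bot (by omega) _
  · rw [T_of_gt h, T_of_gt (by omega), W_zero_of_gt h]; ring


/-- Adding one trial: tail recurrence. -/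
lemma T_succ (n s : ℕ) : T (n+1) s = (2/3) * T n (s-1) + (1/3) * T n s := by
  rcases Nat.eq_zero_or_pos s with hs | hs
  · subst hs; simp [T_zero]; norm_num
  · obtain ⟨t, rfl⟩ : ∃ t, s = t + 1 := ⟨s-1, by omega⟩
    unfold T
    have h1 : ∀ i ∈ Finset.Ico (t+1) (n+2), W (n+1) i
        = (2/3) * W n (i-1) + (1/3) * W n i := by
      intro i hi
      simp only [Finset.mem_Ico] at hi
      obtain ⟨j, rfl⟩ : ∃ j, i = j + 1 := ⟨i-1, by omega⟩
      simpa using W_succ_succ n j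
    rw [Finset.sum_congr rfl h1, Finset.sum_add_distrib, ← Finset.mul_sum, ← Finset.mul_sum]
    congr 1
    · congr 1
      rw [show (t+1) - 1 = t from rfl, show n+2 = (n+1)+1 from rfl]
      rw [show ∑ i ∈ Finset.Ico t (n+1), W n i
          = ∑ i ∈ Finset.Ico t (n+1), W n ((i+1)-1) from by simp]
      rw [Finset.sum_Ico_add' (fun x => W n (x-1)) t (n+1) 1]
    · congr 1
      rw [show n + 2 = (n+1) + 1 from rfl]
      rcases le_or_gt (t+1) (n+1) with h | h
      · rw [Finset.sum_Ico_succ_top (by omega), W_zero_of_gt (by omega)]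
        simp
      · rw [Finset.Ico_eq_empty (by omega), Finset.Ico_eq_empty (by omega)]

/-- tail of sum of two binomials: convolution. -/
lemma T_split (m1 m2 : ℕ) : ∀ s, T (m1 + m2) s = ∑ b ∈ range (m2+1), W m2 b * T m1 (s - b) := by
  induction m2 with
  | zero => intro s; simp [W]
  | succ m ih =>
    intro s
    rw [show m1 + (m+1) = (m1 + m) + 1 from rfl, T_succ, ih, ih]
    rw [Finset.sum_range_succ' (fun b => W (m+1) b * T m1 (s - b)) (m+1)]
    have h1 : ∀ i ∈ range (m+1), W (m+1) (i+1) * T m1 (s - (i+1))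
        = (2/3) * (W m i * T m1 ((s-1) - i)) + (1/3) * (W m (i+1) * T m1 (s - (i+1))) := by
      intro i _
      rw [W_succ_succ]
      rw [show s - (i+1) = (s-1) - i from by omega]
      ring
    rw [Finset.sum_congr rfl h1, Finset.sum_add_distrib, ← Finset.mul_sum, ← Finset.mul_sum]
    rw [W_succ_zero]
    have h2 : ∑ b ∈ range (m+1), W m b * T m1 (s - b)
        = ∑ i ∈ range (m+1), W m (i+1) * T m1 (s - (i+1)) + W m 0 * T m1 s := by
      rw [Finset.sum_range_succ' (fun b => W m b * T m1 (s - b)) m]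
      rw [Finset.sum_range_succ (fun i => W m (i+1) * T m1 (s - (i+1))) m,
        show W m (m+1) = 0 from W_zero_of_gt (by omega)]
      simp
    rw [h2, Nat.sub_zero]
    ring


lemma T_add_one (m s : ℕ) (hs : 1 ≤ s) : T (m+1) s = T m s + (2/3) * W m (s-1) := by
  rw [T_succ]
  have : T m (s-1) = W m (s-1) + T m s := by
    rw [show s = (s-1)+1 from by omega] at *
    exact T_step m (s-1+1-1)
  rw [this]; ring

/-- Step A: NegBin(n+1, 1/3) CDF at m equals Binomial(n+1+m, 2/3) upper tail at n+1. -/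
lemma negbin_cdf (n : ℕ) : ∀ m : ℕ,
    ∑ j ∈ range (m+1), ((n + j).choose j : ℝ) * (2/3)^(n+1) * (1/3)^j
      = T (n+1+m) (n+1) := by
  intro m
  induction m with
  | zero =>
    simp only [range_one, Finset.sum_singleton, Nat.choose_zero_right, Nat.add_zero]
    unfold T
    rw [show n+1+0+1 = (n+1)+1 from rfl, Nat.Ico_succ_singleton]
    simp [W]
  | succ m ih =>
    rw [Finset.sum_range_succ, ih, show n+1+(m+1) = (n+1+m)+1 from by ring,
      T_add_one _ _ (by omega)]
    congr 1
    unfold W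
    rw [show n+1-1 = n from rfl, show n+1+m-n = m+1 from by omega,
      show (n+1+m).choose n = (n+(m+1)).choose (m+1) from by
        rw [show n+1+m = n + (m+1) from by ring, ← Nat.choose_symm_add]]
    ring


/-- Thinning: mixing Bin(n-K, 2/3) over K ~ Bin(n,1/2) gives Bin(n,1/3). -/
lemma thinning (n b : ℕ) :
    ∑ k ∈ range (n+1), (n.choose k : ℝ) * (1/2)^n * W (n-k) b
      = (n.choose b : ℝ) * (1/3)^b * (2/3)^(n-b) := by
  rcases le_or_gt b n with hb | hb
  · rw [← Finset.sum_range_reflect]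
    have h1 : ∀ j ∈ range (n+1), (n.choose (n+1-1-j) : ℝ) * (1/2)^n * W (n-(n+1-1-j)) b
        = (n.choose j : ℝ) * (1/2)^n * W j b := by
      intro j hj
      simp only [Finset.mem_range, Nat.lt_succ_iff] at hj
      rw [show n+1-1-j = n - j from rfl, Nat.choose_symm hj, show n - (n - j) = j from by omega]
    rw [Finset.sum_congr rfl h1]
    have h2 : ∑ j ∈ range (n+1), (n.choose j : ℝ) * (1/2)^n * W j b
        = ∑ j ∈ Finset.Ico b (n+1), (n.choose j : ℝ) * (1/2)^n * W j b := by
      symm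
      apply Finset.sum_subset
      · intro x hx; simp only [Finset.mem_Ico] at hx; simp [Finset.mem_range]; omega
      · intro x _ hx
        simp only [Finset.mem_Ico, Finset.mem_range] at *
        have : x < b := by omega
        rw [W_zero_of_gt this]; ring
    rw [h2, Finset.sum_Ico_eq_sum_range]
    have h3 : ∀ u ∈ range (n+1-b), (n.choose (b+u) : ℝ) * (1/2)^n * W (b+u) b
        = ((n.choose b : ℝ) * (1/2)^n * (2/3)^b) * (((n-b).choose u : ℝ) * (1/3)^u * 1^((n-b)-u)) := by
      intro u hu
      simp only [Finset.mem_range] at hu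
      have hbn : b + u ≤ n := by omega
      have hnat := Nat.choose_mul (n := n) (Nat.le_add_right b u)
      rw [show b + u - b = u from by omega] at hnat
      have hcast : (n.choose (b+u) : ℝ) * ((b+u).choose b : ℝ) = (n.choose b : ℝ) * ((n-b).choose u : ℝ) := by
        rw [← Nat.cast_mul, ← Nat.cast_mul, hnat]
      unfold W
      rw [show b + u - b = u from by omega, one_pow]
      linear_combination ((1/2:ℝ)^n * (2/3)^b * (1/3)^u) * hcast
    rw [Finset.sum_congr rfl h3, ← Finset.mul_sum]
    have h4 : ∑ u ∈ range (n+1-b), (((n-b).choose u : ℝ) * (1/3)^u * 1^((n-b)-u)) = (4/3)^(n-b) := by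
      have h := add_pow (1/3 : ℝ) 1 (n-b)
      norm_num at h
      rw [show n+1-b = (n-b)+1 from by omega]
      rw [show ((4:ℝ)/3)^(n-b) = ∑ x ∈ range (n-b+1), (1/3:ℝ)^x * (n-b).choose x from h]
      apply Finset.sum_congr rfl
      intro x _
      simp
      ring
    rw [h4]
    have hsplit : ((1:ℝ)/2)^n = (1/2:ℝ)^b * (1/2)^(n-b) := by
      rw [← pow_add]; congr 1; omega
    rw [hsplit, show ((1:ℝ)/3)^b = (1/2:ℝ)^b * (2/3)^b from by rw [← mul_pow]; norm_num,
      show ((2:ℝ)/3)^(n-b) = (1/2:ℝ)^(n-b) * (4/3)^(n-b) from by rw [← mul_pow]; norm_num]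
    ring
  · rw [Nat.choose_eq_zero_of_lt hb]
    rw [Finset.sum_eq_zero]
    · simp
    · intro k hk
      rw [W_zero_of_gt (by omega)]
      ring


noncomputable def p0 (n : ℕ) : ℝ := ∑ c ∈ range (n+1), W n c * W n c
noncomputable def p1 (n : ℕ) : ℝ := ∑ i ∈ range n, W n (i+1) * W n i
noncomputable def S1 (n : ℕ) : ℝ := ∑ c ∈ range (n+1), W n c * T n (c+1)
noncomputable def S2 (n : ℕ) : ℝ := ∑ c ∈ range (n+1), W n c * T n c
noncomputable def S3 (n : ℕ) : ℝ := ∑ c ∈ range (n+1), W n c * T n (c-1)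

lemma S2_eq : ∀ n, S2 n = S1 n + p0 n := by
  intro n
  unfold S1 S2 p0
  rw [← Finset.sum_add_distrib]
  apply Finset.sum_congr rfl
  intro c _
  rw [T_step n c]
  ring

lemma S3_eq (n : ℕ) : S3 n = S2 n + p1 n := by
  unfold S2 S3 p1
  rw [Finset.sum_range_succ' (fun c => W n c * T n (c-1)) n,
    Finset.sum_range_succ' (fun c => W n c * T n c) n]
  simp only [Nat.add_sub_cancel, Nat.zero_sub]
  rw [add_right_comm, ← Finset.sum_add_distrib]
  congr 1
  apply Finset.sum_congr rfl
  intro i _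
  rw [T_step n i]
  ring

lemma S1_add_S2 (n : ℕ) : S1 n + S2 n = 1 := by
  have key : S2 n = ∑ c ∈ range (n+1), W n c * (∑ u ∈ range (c+1), W n u) := by
    unfold S2 T
    have h1 : ∀ c ∈ range (n+1), W n c * ∑ i ∈ Finset.Ico c (n+1), W n i
        = ∑ u ∈ range (n+1), (if c ≤ u then W n c * W n u else 0) := by
      intro c _
      rw [Finset.mul_sum, show Finset.Ico c (n+1) = Finset.filter (fun u => c ≤ u) (range (n+1))
        from by ext x; simp [Finset.mem_Ico]; omega, Finset.sum_filter]
    have h2 : ∀ c ∈ range (n+1), W n c * ∑ u ∈ range (c+1), W n u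
        = ∑ u ∈ range (n+1), (if u ≤ c then W n c * W n u else 0) := by
      intro c hc
      simp only [Finset.mem_range, Nat.lt_succ_iff] at hc
      rw [Finset.mul_sum, show range (c+1) = Finset.filter (fun u => u ≤ c) (range (n+1))
        from by ext x; simp [Finset.mem_range]; omega, Finset.sum_filter]
    rw [Finset.sum_congr rfl h1, Finset.sum_congr rfl h2, Finset.sum_comm]
    apply Finset.sum_congr rfl; intro u _
    apply Finset.sum_congr rfl; intro c _
    by_cases h : u ≤ c <;> simp [h, mul_comm]
  have expand : S1 n + S2 n = ∑ c ∈ range (n+1), W n c * 1 := by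
    rw [key]
    unfold S1
    rw [← Finset.sum_add_distrib]
    apply Finset.sum_congr rfl
    intro c hc
    simp only [Finset.mem_range, Nat.lt_succ_iff] at hc
    rw [← mul_add]
    have h3 : T n (c+1) + ∑ u ∈ range (c+1), W n u = 1 := by
      rw [add_comm, ← sum_W n]
      unfold T
      exact Finset.sum_range_add_sum_Ico (W n) (by omega)
    rw [h3, mul_one]
  rw [expand]
  simp only [mul_one]
  exact sum_W n

/-- The master identity. -/
lemma master (n : ℕ) :
    ∑ k ∈ range (n+1), ((n.choose k : ℝ) * (1/2)^n) *
        (∑ j ∈ range ((n+1-k) + 1), ((n + j).choose j : ℝ) * (2/3)^(n+1) * (1/3)^j)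
      = 1/2 + (7/18) * p0 n + (4/9) * p1 n := by
  have step1 : ∀ k ∈ range (n+1), ((n.choose k : ℝ) * (1/2)^n) *
        (∑ j ∈ range ((n+1-k) + 1), ((n + j).choose j : ℝ) * (2/3)^(n+1) * (1/3)^j)
      = ∑ b ∈ range (n+1), (n.choose k : ℝ) * (1/2)^n * W (n-k) b * T (n+2) (n+1-b) := by
    intro k hk
    simp only [Finset.mem_range, Nat.lt_succ_iff] at hk
    rw [negbin_cdf n (n+1-k), show n+1+(n+1-k) = (n+2) + (n-k) from by omega,
      T_split (n+2) (n-k) (n+1)]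
    rw [Finset.mul_sum]
    rw [Finset.sum_subset (Finset.range_subset_range.2 (by omega : n-k+1 ≤ n+1))]
    · exact Finset.sum_congr rfl fun b _ => by ring
    · intro b _ hb
      simp only [Finset.mem_range] at *
      rw [W_zero_of_gt (by omega)]
      ring
  rw [Finset.sum_congr rfl step1, Finset.sum_comm]
  have step2 : ∀ b ∈ range (n+1),
      ∑ k ∈ range (n+1), (n.choose k : ℝ) * (1/2)^n * W (n-k) b * T (n+2) (n+1-b)
      = W n (n-b) * T (n+2) (n+1-b) := by
    intro b hb
    simp only [Finset.mem_range, Nat.lt_succ_iff] at hb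
    rw [← Finset.sum_mul, thinning n b]
    congr 1
    unfold W
    rw [Nat.choose_symm hb, show n - (n-b) = b from by omega]
    ring
  rw [Finset.sum_congr rfl step2]
  rw [← Finset.sum_range_reflect (fun b => W n (n-b) * T (n+2) (n+1-b)) (n+1)]
  have step3 : ∀ c ∈ range (n+1), W n (n - (n+1-1-c)) * T (n+2) (n+1-(n+1-1-c))
      = (1/9) * (W n c * T n (c+1)) + (4/9) * (W n c * T n c) + (4/9) * (W n c * T n (c-1)) := by
    intro c hc
    simp only [Finset.mem_range, Nat.lt_succ_iff] at hc
    rw [show n - (n+1-1-c) = c from by omega, show n+1-(n+1-1-c) = c+1 from by omega]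
    rw [show n + 2 = n + 2 from rfl, T_split n 2 (c+1)]
    rw [show range (2+1) = {0, 1, 2} from by decide]
    rw [Finset.sum_insert (by decide), Finset.sum_insert (by decide), Finset.sum_singleton]
    rw [show W 2 0 = 1/9 from by norm_num [W], show W 2 1 = 4/9 from by norm_num [W],
      show W 2 2 = 4/9 from by norm_num [W]]
    rw [show c+1-0 = c+1 from rfl, show c+1-1 = c from rfl, show c+1-2 = c-1 from by omega]
    ring
  rw [Finset.sum_congr rfl step3]
  rw [Finset.sum_add_distrib, Finset.sum_add_distrib, ← Finset.mul_sum, ← Finset.mul_sum,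
    ← Finset.mul_sum]
  have hS1 : S1 n = (1 - p0 n) / 2 := by
    have h1 := S1_add_S2 n
    have h2 := S2_eq n
    linarith
  have : (∑ c ∈ range (n+1), W n c * T n (c+1)) = S1 n := rfl
  rw [this]
  have : (∑ c ∈ range (n+1), W n c * T n c) = S2 n := rfl
  rw [this]
  have : (∑ c ∈ range (n+1), W n c * T n (c-1)) = S3 n := rfl
  rw [this]
  rw [S3_eq, S2_eq, hS1]
  ring


lemma W_ratio (n k : ℕ) (hk : k < n) :
    W n (k+1) * ((k:ℝ)+1) = 2 * W n k * ((n:ℝ) - k) := by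
  unfold W
  have hc := Nat.choose_succ_right_eq n k
  have hcast : (n.choose (k+1) : ℝ) * ((k:ℝ)+1) = (n.choose k : ℝ) * ((n:ℝ) - k) := by
    have : ((n.choose (k+1) * (k+1) : ℕ) : ℝ) = ((n.choose k * (n - k) : ℕ) : ℝ) := by
      rw [hc]
    push_cast [Nat.cast_sub hk.le] at this
    convert this using 2
  rw [show n - k = (n - (k+1)) + 1 from by omega, pow_succ, show n - (k+1) = n-k-1 from rfl]
  calc (n.choose (k+1):ℝ) * (2/3)^(k+1) * (1/3)^(n-k-1) * ((k:ℝ)+1)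
      = ((n.choose (k+1):ℝ) * ((k:ℝ)+1)) * (2/3)^(k+1) * (1/3)^(n-k-1) := by ring
    _ = ((n.choose k : ℝ) * ((n:ℝ) - k)) * (2/3)^(k+1) * (1/3)^(n-k-1) := by rw [hcast]
    _ = 2 * ((n.choose k:ℝ) * (2/3)^k * ((1/3)^(n-k-1) * (1/3))) * ((n:ℝ) - k) := by
        rw [pow_succ]; ring

lemma step_up (m k : ℕ) (h : k + 1 ≤ 2*m) : W (3*m) k ≤ W (3*m) (k+1) := by
  have hk : k < 3*m := by omega
  have hr := W_ratio (3*m) k hk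
  have h1 : ((k:ℝ)+1) ≤ 2 * (((3*m : ℕ):ℝ) - k) := by
    push_cast; push_cast at hr ⊢; nlinarith [show (k:ℝ) + 1 ≤ 2*m from by exact_mod_cast h]
  have h2 : (0:ℝ) < (k:ℝ)+1 := by positivity
  nlinarith [W_nonneg (3*m) k, W_nonneg (3*m) (k+1)]

lemma step_down (m k : ℕ) (h : 2*m ≤ k) : W (3*m) (k+1) ≤ W (3*m) k := by
  rcases lt_or_ge k (3*m) with hk | hk
  · have hr := W_ratio (3*m) k hk
    have h1 : 2 * (((3*m : ℕ):ℝ) - k) ≤ ((k:ℝ)+1) := by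
      have : (2*m : ℝ) ≤ k := by exact_mod_cast h
      push_cast; push_cast at this; nlinarith
    have h2 : (0:ℝ) < (k:ℝ)+1 := by positivity
    nlinarith [W_nonneg (3*m) k, W_nonneg (3*m) (k+1)]
  · rw [W_zero_of_gt (by omega)]
    exact W_nonneg _ _

noncomputable def A (m : ℕ) : ℝ := W (3*m) (2*m)

lemma A_nonneg (m : ℕ) : 0 ≤ A m := W_nonneg _ _

lemma W_le_mode (m k : ℕ) : W (3*m) k ≤ A m := by
  unfold A
  rcases le_or_gt k (2*m) with hk | hk
  · have key : ∀ d, W (3*m) (2*m - d) ≤ W (3*m) (2*m) := by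
      intro d
      induction d with
      | zero => simp
      | succ e ih =>
        rcases lt_or_ge e (2*m) with he | he
        · calc W (3*m) (2*m - (e+1)) ≤ W (3*m) ((2*m - (e+1)) + 1) :=
                step_up m _ (by omega)
            _ = W (3*m) (2*m - e) := by congr 1; omega
            _ ≤ _ := ih
        · rw [show 2*m - (e+1) = 2*m - e from by omega]
          exact ih
    have := key (2*m - k)
    rwa [show 2*m - (2*m - k) = k from by omega] at this
  · have key : ∀ d, W (3*m) (2*m + d) ≤ W (3*m) (2*m) := by
      intro d
      induction d with
      | zero => simp
      | succ e ih =>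
        calc W (3*m) (2*m + (e+1)) = W (3*m) ((2*m+e) + 1) := rfl
          _ ≤ W (3*m) (2*m + e) := step_down m _ (by omega)
          _ ≤ _ := ih
    have := key (k - 2*m)
    rwa [show 2*m + (k - 2*m) = k from by omega] at this

lemma conv_step (n : ℕ) (B : ℝ) (h : ∀ j, W n j ≤ B) : ∀ k, W (n+1) k ≤ B := by
  intro k
  cases k with
  | zero =>
    rw [W_succ_zero]
    nlinarith [W_nonneg n 0, h 0]
  | succ j =>
    rw [W_succ_succ]
    nlinarith [h j, h (j+1)]

lemma W_le_A (n k : ℕ) : W n k ≤ A (n / 3) := by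
  set q := n / 3 with hq
  have h0 : ∀ j, W (3*q) j ≤ A q := W_le_mode q
  have h1 : ∀ j, W (3*q+1) j ≤ A q := conv_step _ _ h0
  have h2 : ∀ j, W (3*q+2) j ≤ A q := conv_step _ _ h1
  have : n = 3*q ∨ n = 3*q+1 ∨ n = 3*q+2 := by omega
  rcases this with h | h | h <;> rw [h]
  · exact h0 k
  · exact h1 k
  · exact h2 k


lemma A_rec (m : ℕ) :
    A (m+1) * (((2*m+1)*(2*m+2)*(m+1) : ℕ) : ℝ) * 27
      = A m * (((3*m+1)*(3*m+2)*(3*m+3) : ℕ) : ℝ) * 4 := by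
  have h1 := Nat.choose_mul_factorial_mul_factorial (show 2*m+2 ≤ 3*m+3 by omega)
  have h2 := Nat.choose_mul_factorial_mul_factorial (show 2*m ≤ 3*m by omega)
  rw [show 3*m+3 - (2*m+2) = m+1 from by omega] at h1
  rw [show 3*m - 2*m = m from by omega] at h2
  have h1r : ((3*m+3).choose (2*m+2) : ℝ) * ((2*m+2).factorial : ℝ) * ((m+1).factorial : ℝ) = ((3*m+3).factorial : ℝ) := by
    exact_mod_cast congrArg (Nat.cast : ℕ → ℝ) h1
  have h2r : ((3*m).choose (2*m) : ℝ) * ((2*m).factorial : ℝ) * ((m).factorial : ℝ) = ((3*m).factorial : ℝ) := by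
    exact_mod_cast congrArg (Nat.cast : ℕ → ℝ) h2
  have e1 : ((2*m+2).factorial : ℝ) = ((2*m+2):ℝ) * ((2*m+1):ℝ) * ((2*m).factorial : ℝ) := by
    rw [show 2*m+2 = (2*m+1)+1 from rfl, Nat.factorial_succ,
      show 2*m+1 = (2*m)+1 from rfl, Nat.factorial_succ]
    push_cast; ring
  have e2 : ((m+1).factorial : ℝ) = ((m+1):ℝ) * ((m).factorial : ℝ) := by
    rw [Nat.factorial_succ]; push_cast; ring
  have e3 : ((3*m+3).factorial : ℝ) = ((3*m+3):ℝ) * ((3*m+2):ℝ) * ((3*m+1):ℝ) * ((3*m).factorial : ℝ) := by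
    rw [show 3*m+3 = (3*m+2)+1 from rfl, Nat.factorial_succ,
      show 3*m+2 = (3*m+1)+1 from rfl, Nat.factorial_succ,
      show 3*m+1 = (3*m)+1 from rfl, Nat.factorial_succ]
    push_cast; ring
  -- key choose identity over ℝ
  have key : (((2*m+1)*(2*m+2)*(m+1) : ℕ) : ℝ) * ((3*m+3).choose (2*m+2) : ℝ)
      = (((3*m+1)*(3*m+2)*(3*m+3) : ℕ) : ℝ) * ((3*m).choose (2*m) : ℝ) := by
    have hne : ((2*m).factorial : ℝ) * ((m).factorial : ℝ) ≠ 0 := by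
      positivity
    apply mul_right_cancel₀ hne
    push_cast
    rw [e1, e2, e3] at h1r
    linear_combination h1r - ((3*(m:ℝ)+1)*(3*(m:ℝ)+2)*(3*(m:ℝ)+3)) * h2r
  unfold A
  unfold W
  rw [show 3*(m+1) = 3*m+3 from by ring, show 2*(m+1) = 2*m+2 from by ring,
    show 3*m+3 - (2*m+2) = m+1 from by omega, show 3*m - 2*m = m from by omega]
  rw [show (2:ℝ)/3 = 2/3 from rfl]
  have p1 : ((2:ℝ)/3)^(2*m+2) = (2/3)^(2*m) * (4/9) := by
    rw [pow_add]; norm_num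
  have p2 : ((1:ℝ)/3)^(m+1) = (1/3)^m * (1/3) := by
    rw [pow_add]; norm_num
  rw [p1, p2]
  push_cast at key ⊢
  linear_combination (((2:ℝ)/3)^(2*m) * ((1:ℝ)/3)^m * 4) * key

lemma A_sq_le (m : ℕ) : A m ^ 2 * ((m:ℝ)+1) ≤ 1 := by
  induction m with
  | zero =>
    have : A 0 = 1 := by
      unfold A W; norm_num
    rw [this]; norm_num
  | succ m ih =>
    have hX : (0:ℝ) < (((2*m+1)*(2*m+2)*(m+1) : ℕ) : ℝ) * 27 := by positivity
    have hrec := A_rec m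
    have hA1 : A (m+1) = A m * ((((3*m+1)*(3*m+2)*(3*m+3) : ℕ) : ℝ) * 4)
        / ((((2*m+1)*(2*m+2)*(m+1) : ℕ) : ℝ) * 27) := by
      rw [eq_div_iff (ne_of_gt hX)]
      linear_combination hrec
    rw [hA1]
    rw [div_pow, div_mul_eq_mul_div, div_le_one (by positivity)]
    have hpoly : ((((3*m+1)*(3*m+2)*(3*m+3) : ℕ) : ℝ) * 4)^2 * (((m:ℝ)+1)+1)
        ≤ ((((2*m+1)*(2*m+2)*(m+1) : ℕ) : ℝ) * 27)^2 * ((m:ℝ)+1) := by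
      push_cast
      have hm : (0:ℝ) ≤ (m:ℝ) := Nat.cast_nonneg m
      nlinarith [sq_nonneg ((m:ℝ)), pow_nonneg hm 3, pow_nonneg hm 4, pow_nonneg hm 5, hm]
    have hAm := A_nonneg m
    have hAm2 : 0 ≤ A m ^ 2 := sq_nonneg _
    push_cast
    push_cast at ih hpoly
    nlinarith [mul_le_mul_of_nonneg_left hpoly hAm2,
      mul_le_mul_of_nonneg_right ih
        (show (0:ℝ) ≤ ((3*(m:ℝ)+1)*(3*(m:ℝ)+2)*(3*(m:ℝ)+3) * 4)^2 by positivity)]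


lemma p0_nonneg (n : ℕ) : 0 ≤ p0 n :=
  Finset.sum_nonneg fun c _ => mul_nonneg (W_nonneg n c) (W_nonneg n c)

lemma p1_nonneg (n : ℕ) : 0 ≤ p1 n :=
  Finset.sum_nonneg fun i _ => mul_nonneg (W_nonneg n _) (W_nonneg n _)

lemma p0_le (n : ℕ) : p0 n ≤ A (n / 3) := by
  unfold p0
  calc ∑ c ∈ range (n+1), W n c * W n c
      ≤ ∑ c ∈ range (n+1), W n c * A (n/3) :=
        Finset.sum_le_sum fun c _ =>
          mul_le_mul_of_nonneg_left (W_le_A n c) (W_nonneg n c)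
    _ = A (n/3) := by rw [← Finset.sum_mul, sum_W, one_mul]

lemma p1_le (n : ℕ) : p1 n ≤ A (n / 3) := by
  unfold p1
  calc ∑ i ∈ range n, W n (i+1) * W n i
      ≤ ∑ i ∈ range n, A (n/3) * W n i :=
        Finset.sum_le_sum fun i _ =>
          mul_le_mul_of_nonneg_right (W_le_A n (i+1)) (W_nonneg n i)
    _ = A (n/3) * ∑ i ∈ range n, W n i := by rw [Finset.mul_sum]
    _ ≤ A (n/3) * 1 := by
        apply mul_le_mul_of_nonneg_left _ (A_nonneg _)
        rw [← sum_W n]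
        exact Finset.sum_le_sum_of_subset_of_nonneg
          (Finset.range_subset_range.2 (by omega)) (fun i _ _ => W_nonneg n i)
    _ = A (n/3) := mul_one _

lemma A_le_sqrt (m : ℕ) : A m ≤ Real.sqrt (1 / ((m:ℝ)+1)) := by
  rw [show (1 : ℝ) / ((m:ℝ)+1) = 1 / ((m:ℝ)+1) from rfl]
  have h : A m ^ 2 ≤ 1 / ((m:ℝ)+1) := by
    have hpos : (0:ℝ) < (m:ℝ)+1 := by positivity
    rw [le_div_iff₀ hpos]
    exact A_sq_le m
  calc A m = Real.sqrt (A m ^ 2) := by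
        rw [Real.sqrt_sq (A_nonneg m)]
    _ ≤ Real.sqrt (1 / ((m:ℝ)+1)) := Real.sqrt_le_sqrt h

lemma bound_tendsto : Tendsto (fun n : ℕ => Real.sqrt (1 / (((n/3 : ℕ):ℝ)+1))) atTop (nhds 0) := by
  have h2 : Tendsto (fun n : ℕ => n / 3) atTop atTop := by
    apply tendsto_atTop_atTop.2
    intro b
    exact ⟨3*b, fun a ha => by omega⟩
  have h1 : Tendsto (fun m : ℕ => (1:ℝ) / ((m:ℝ)+1)) atTop (nhds 0) :=
    tendsto_one_div_add_atTop_nhds_zero_nat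
  have h3 : Tendsto (fun n : ℕ => (1:ℝ) / (((n/3 : ℕ):ℝ)+1)) atTop (nhds 0) := h1.comp h2
  have h4 := (Real.continuous_sqrt.tendsto 0).comp h3
  rw [Real.sqrt_zero] at h4
  apply h4.congr
  intro n
  simp [Function.comp]

lemma p0_comp_tendsto :
    Tendsto (fun r : ℕ => p0 (r - 1)) atTop (nhds 0) := by
  apply squeeze_zero (fun r => p0_nonneg (r-1))
    (fun r => le_trans (p0_le (r-1)) (A_le_sqrt ((r-1)/3)))
  exact bound_tendsto.comp (tendsto_sub_atTop_nat 1)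

lemma p1_comp_tendsto :
    Tendsto (fun r : ℕ => p1 (r - 1)) atTop (nhds 0) := by
  apply squeeze_zero (fun r => p1_nonneg (r-1))
    (fun r => le_trans (p1_le (r-1)) (A_le_sqrt ((r-1)/3)))
  exact bound_tendsto.comp (tendsto_sub_atTop_nat 1)

end SecondTerm

open SecondTerm in
/-- If `X ~ Binomial(r-1, 1/2)` and `Y ~ NegBinomial(r, 1/3)` are independent, then
`Σ_k P(X = k) · P(Y ≤ r - k) → 1/2` as `r → ∞`. -/
theorem second_term_tendsto_one_half :
    Tendsto
      (fun r : ℕ =>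
        ∑ k ∈ range r,
          (((r - 1).choose k : ℝ) * (1 / 2 : ℝ) ^ (r - 1)) *
            ∑ j ∈ range (r - k + 1),
              (((r + j - 1).choose j : ℝ) * (2 / 3 : ℝ) ^ r * (1 / 3 : ℝ) ^ j))
      atTop (nhds (1 / 2 : ℝ)) := by
  have hG : Tendsto (fun r : ℕ => 1/2 + (7/18) * p0 (r-1) + (4/9) * p1 (r-1))
      atTop (nhds (1 / 2 : ℝ)) := by
    have := ((tendsto_const_nhds (x := (1/2 : ℝ)) (f := atTop)).add
      (p0_comp_tendsto.const_mul (7/18))).add (p1_comp_tendsto.const_mul (4/9))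
    simpa using this
  apply hG.congr'
  filter_upwards [eventually_ge_atTop 1] with r hr
  obtain ⟨n, rfl⟩ : ∃ n, r = n + 1 := ⟨r - 1, by omega⟩
  rw [Nat.add_sub_cancel]
  rw [← master n]
  apply Finset.sum_congr rfl
  intro k hk
  simp only [Finset.mem_range, Nat.lt_succ_iff] at hk
  rw [show n + 1 - k + 1 = (n + 1 - k) + 1 from rfl]
  congr 1
  apply Finset.sum_congr rfl
  intro j _
  rw [show n + 1 + j - 1 = n + j from by omega]
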